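/- arXiv:0805.3437 — 2 statements merged into one kernel-verified Lean document; each statement's English description precedes it below -/
import Mathlib

section
/- Let M be a finite-dimensional (α,β)-Yetter-Drinfeld module. Then the transpose map ι : End(M)^op → End(◇M), ι(u)(f) = f∘u, is an isomorphism of algebras in _H𝒴𝒟^H (an algebra isomorphism which is H-linear and H-colinear), where ◇M is viewed as a (β,α)-Yetter-Drinfeld module. -/
open TensorProduct

noncomputable section

namespace GYD

variable (k H : Type) [Field k] [Ring H] [HopfAlgebra k H]

/-- `φ` is a Hopf algebra automorphism of `H` (a linear equivalence which is both an
algebra morphism and a coalgebra morphism). -/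
def IsHopfAut (φ : H ≃ₗ[k] H) : Prop :=
  (∀ x y : H, φ (x * y) = φ x * φ y) ∧ (φ 1 = 1) ∧
  (∀ h : H, Coalgebra.comul (R := k) (φ h)
      = TensorProduct.map φ.toLinearMap φ.toLinearMap (Coalgebra.comul (R := k) h)) ∧
  (∀ h : H, Coalgebra.counit (R := k) (φ h) = Coalgebra.counit (R := k) h)

/-- `Sinv` is a two-sided inverse of the antipode of `H`. -/
def IsAntipodeInv (Sinv : H → H) : Prop :=
  (∀ h : H, HopfAlgebra.antipode (R := k) (Sinv h) = h) ∧
  (∀ h : H, Sinv (HopfAlgebra.antipode (R := k) h) = h)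

/-- The data `(act, coact)` makes `M` an `(α, β)`-Yetter-Drinfeld module over `H`:
`M` is a left `H`-module, a right `H`-comodule, and the compatibility
`(h·m)₍₀₎ ⊗ (h·m)₍₁₎ = h₂·m₍₀₎ ⊗ β(h₃) m₍₁₎ α(Sinv(h₁))` holds (expressed via
arbitrary finite representations of `(Δ ⊗ id)(Δ h)` and of `coact m`). -/
def IsYD (Sinv α β : H → H) {M : Type} [AddCommGroup M] [Module k M]
    (act : H →ₗ[k] M →ₗ[k] M) (coact : M →ₗ[k] M ⊗[k] H) : Prop :=
  (∀ m : M, act 1 m = m) ∧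
  (∀ (g h : H) (m : M), act (g * h) m = act g (act h m)) ∧
  (∀ m : M, LinearMap.rTensor H coact (coact m)
      = (TensorProduct.assoc k M H H).symm
          (LinearMap.lTensor M (Coalgebra.comul (R := k)) (coact m))) ∧
  (∀ m : M,
    TensorProduct.rid k M (LinearMap.lTensor M (Coalgebra.counit (R := k)) (coact m)) = m) ∧
  (∀ (h : H) (m : M) (s t : Finset ℕ) (a b c : ℕ → H) (m₀ : ℕ → M) (m₁ : ℕ → H),
    LinearMap.rTensor H (Coalgebra.comul (R := k)) (Coalgebra.comul (R := k) h)
        = ∑ i ∈ s, (a i ⊗ₜ[k] b i) ⊗ₜ[k] c i →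
    coact m = ∑ j ∈ t, m₀ j ⊗ₜ[k] m₁ j →
    coact (act h m) = ∑ i ∈ s, ∑ j ∈ t,
      act (b i) (m₀ j) ⊗ₜ[k] (β (c i) * m₁ j * α (Sinv (a i))))

/-- Characterization of the action `h · (m ⊗ n) = θ₁(h₁)·m ⊗ θ₂(h₂)·n` on `M ⊗ N`. -/
def TensorActChar (θ₁ θ₂ : H → H) {M N : Type} [AddCommGroup M] [Module k M]
    [AddCommGroup N] [Module k N]
    (actM : H →ₗ[k] M →ₗ[k] M) (actN : H →ₗ[k] N →ₗ[k] N)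
    (act : H →ₗ[k] (M ⊗[k] N) →ₗ[k] (M ⊗[k] N)) : Prop :=
  ∀ (h : H) (m : M) (n : N) (s : Finset ℕ) (p q : ℕ → H),
    Coalgebra.comul (R := k) h = ∑ i ∈ s, p i ⊗ₜ[k] q i →
    act h (m ⊗ₜ[k] n) = ∑ i ∈ s, actM (θ₁ (p i)) m ⊗ₜ[k] actN (θ₂ (q i)) n

/-- Characterization of the "type two" action `h · (m ⊗ n) = h₂·m ⊗ h₁·n` on `M ⊗ N`. -/
def TensorActCharTwo {M N : Type} [AddCommGroup M] [Module k M]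
    [AddCommGroup N] [Module k N]
    (actM : H →ₗ[k] M →ₗ[k] M) (actN : H →ₗ[k] N →ₗ[k] N)
    (act : H →ₗ[k] (M ⊗[k] N) →ₗ[k] (M ⊗[k] N)) : Prop :=
  ∀ (h : H) (m : M) (n : N) (s : Finset ℕ) (p q : ℕ → H),
    Coalgebra.comul (R := k) h = ∑ i ∈ s, p i ⊗ₜ[k] q i →
    act h (m ⊗ₜ[k] n) = ∑ i ∈ s, actM (q i) m ⊗ₜ[k] actN (p i) n

/-- Characterization of the coaction `m ⊗ n ↦ (m₍₀₎ ⊗ n₍₀₎) ⊗ n₍₁₎ m₍₁₎` on `M ⊗ N`. -/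
def TensorCoactChar {M N : Type} [AddCommGroup M] [Module k M]
    [AddCommGroup N] [Module k N]
    (coactM : M →ₗ[k] M ⊗[k] H) (coactN : N →ₗ[k] N ⊗[k] H)
    (coact : M ⊗[k] N →ₗ[k] (M ⊗[k] N) ⊗[k] H) : Prop :=
  ∀ (m : M) (n : N) (s t : Finset ℕ) (m₀ : ℕ → M) (m₁ : ℕ → H) (n₀ : ℕ → N) (n₁ : ℕ → H),
    coactM m = ∑ i ∈ s, m₀ i ⊗ₜ[k] m₁ i →
    coactN n = ∑ j ∈ t, n₀ j ⊗ₜ[k] n₁ j →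
    coact (m ⊗ₜ[k] n) = ∑ i ∈ s, ∑ j ∈ t, (m₀ i ⊗ₜ[k] n₀ j) ⊗ₜ[k] (n₁ j * m₁ i)

/-- Characterization of the "type two" coaction `m ⊗ n ↦ (m₍₀₎ ⊗ n₍₀₎) ⊗ m₍₁₎ n₍₁₎`. -/
def TensorCoactCharTwo {M N : Type} [AddCommGroup M] [Module k M]
    [AddCommGroup N] [Module k N]
    (coactM : M →ₗ[k] M ⊗[k] H) (coactN : N →ₗ[k] N ⊗[k] H)
    (coact : M ⊗[k] N →ₗ[k] (M ⊗[k] N) ⊗[k] H) : Prop :=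
  ∀ (m : M) (n : N) (s t : Finset ℕ) (m₀ : ℕ → M) (m₁ : ℕ → H) (n₀ : ℕ → N) (n₁ : ℕ → H),
    coactM m = ∑ i ∈ s, m₀ i ⊗ₜ[k] m₁ i →
    coactN n = ∑ j ∈ t, n₀ j ⊗ₜ[k] n₁ j →
    coact (m ⊗ₜ[k] n) = ∑ i ∈ s, ∑ j ∈ t, (m₀ i ⊗ₜ[k] n₀ j) ⊗ₜ[k] (m₁ i * n₁ j)

/-- Characterization of the action `(h · f)(m) = f (θ(h) · m)` on the dual space. -/
def DualActChar (θ : H → H) {M : Type} [AddCommGroup M] [Module k M]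
    (actM : H →ₗ[k] M →ₗ[k] M)
    (actD : H →ₗ[k] Module.Dual k M →ₗ[k] Module.Dual k M) : Prop :=
  ∀ (h : H) (f : Module.Dual k M) (m : M), actD h f m = f (actM (θ h) m)

/-- Characterization of the coaction `f₍₀₎(m) ⊗ f₍₁₎ = f(m₍₀₎) ⊗ σ(m₍₁₎)` on the dual space
(expressed through contraction against evaluation at each `m`). -/
def DualCoactChar (σ : H → H) {M : Type} [AddCommGroup M] [Module k M]
    (coactM : M →ₗ[k] M ⊗[k] H)
    (coactD : Module.Dual k M →ₗ[k] Module.Dual k M ⊗[k] H) : Prop :=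
  ∀ (f : Module.Dual k M) (m : M) (t : Finset ℕ) (m₀ : ℕ → M) (m₁ : ℕ → H),
    coactM m = ∑ j ∈ t, m₀ j ⊗ₜ[k] m₁ j →
    TensorProduct.lid k H (LinearMap.rTensor H (Module.Dual.eval k M m) (coactD f))
      = ∑ j ∈ t, f (m₀ j) • σ (m₁ j)

/-- Characterization of the action `(h · u)(m) = θ(h₁) · u (θ(S(h₂)) · m)` on `End(M)`. -/
def EndActChar (θ : H → H) {M : Type} [AddCommGroup M] [Module k M]
    (actM : H →ₗ[k] M →ₗ[k] M)
    (actE : H →ₗ[k] Module.End k M →ₗ[k] Module.End k M) : Prop :=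
  ∀ (h : H) (u : Module.End k M) (m : M) (s : Finset ℕ) (p q : ℕ → H),
    Coalgebra.comul (R := k) h = ∑ i ∈ s, p i ⊗ₜ[k] q i →
    actE h u m = ∑ i ∈ s,
      actM (θ (p i)) (u (actM (θ (HopfAlgebra.antipode (R := k) (q i))) m))

/-- Characterization of the coaction `u₍₀₎(m) ⊗ u₍₁₎ = u(m₍₀₎)₍₀₎ ⊗ Sinv(m₍₁₎) u(m₍₀₎)₍₁₎`
on `End(M)`, expressed through contraction against evaluation at each `m`. -/
def EndCoactChar (Sinv : H → H) {M : Type} [AddCommGroup M] [Module k M]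
    (coactM : M →ₗ[k] M ⊗[k] H)
    (coactE : Module.End k M →ₗ[k] Module.End k M ⊗[k] H) : Prop :=
  ∀ (u : Module.End k M) (m : M) (t : Finset ℕ) (m₀ : ℕ → M) (m₁ : ℕ → H)
    (r : ℕ → Finset ℕ) (n₀ : ℕ → ℕ → M) (n₁ : ℕ → ℕ → H),
    coactM m = ∑ j ∈ t, m₀ j ⊗ₜ[k] m₁ j →
    (∀ j ∈ t, coactM (u (m₀ j)) = ∑ l ∈ r j, n₀ j l ⊗ₜ[k] n₁ j l) →
    LinearMap.rTensor H (LinearMap.applyₗ (R := k) m) (coactE u)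
      = ∑ j ∈ t, ∑ l ∈ r j, n₀ j l ⊗ₜ[k] (Sinv (m₁ j) * n₁ j l)

/-- Characterization of the action `(h · u)(m) = θ(h₂) · u (θ(Sinv(h₁)) · m)` on `End(M)ᵒᵖ`. -/
def EndOpActChar (θ Sinv : H → H) {M : Type} [AddCommGroup M] [Module k M]
    (actM : H →ₗ[k] M →ₗ[k] M)
    (actE : H →ₗ[k] (Module.End k M)ᵐᵒᵖ →ₗ[k] (Module.End k M)ᵐᵒᵖ) : Prop :=
  ∀ (h : H) (u : (Module.End k M)ᵐᵒᵖ) (m : M) (s : Finset ℕ) (p q : ℕ → H),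
    Coalgebra.comul (R := k) h = ∑ i ∈ s, p i ⊗ₜ[k] q i →
    (actE h u).unop m = ∑ i ∈ s,
      actM (θ (q i)) (u.unop (actM (θ (Sinv (p i))) m))

/-- Characterization of the coaction `u₍₀₎(m) ⊗ u₍₁₎ = u(m₍₀₎)₍₀₎ ⊗ u(m₍₀₎)₍₁₎ S(m₍₁₎)`
on `End(M)ᵒᵖ`, expressed through contraction against evaluation at each `m`. -/
def EndOpCoactChar {M : Type} [AddCommGroup M] [Module k M]
    (coactM : M →ₗ[k] M ⊗[k] H)
    (coactE : (Module.End k M)ᵐᵒᵖ →ₗ[k] (Module.End k M)ᵐᵒᵖ ⊗[k] H) : Prop :=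
  ∀ (u : (Module.End k M)ᵐᵒᵖ) (m : M) (t : Finset ℕ) (m₀ : ℕ → M) (m₁ : ℕ → H)
    (r : ℕ → Finset ℕ) (n₀ : ℕ → ℕ → M) (n₁ : ℕ → ℕ → H),
    coactM m = ∑ j ∈ t, m₀ j ⊗ₜ[k] m₁ j →
    (∀ j ∈ t, coactM (u.unop (m₀ j)) = ∑ l ∈ r j, n₀ j l ⊗ₜ[k] n₁ j l) →
    LinearMap.rTensor H ((LinearMap.applyₗ (R := k) m).comp
        (MulOpposite.opLinearEquiv k).symm.toLinearMap) (coactE u)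
      = ∑ j ∈ t, ∑ l ∈ r j,
          n₀ j l ⊗ₜ[k] (n₁ j l * HopfAlgebra.antipode (R := k) (m₁ j))

/-- `A`, with the Yetter-Drinfeld structure `(act, coact)`, is an algebra in the braided
category of Yetter-Drinfeld modules over `H`. -/
def IsYDAlgebra (Sinv : H → H) {A : Type} [Ring A] [Algebra k A]
    (act : H →ₗ[k] A →ₗ[k] A) (coact : A →ₗ[k] A ⊗[k] H) : Prop :=
  IsYD k H Sinv id id act coact ∧
  (∀ (h : H) (a b : A) (s : Finset ℕ) (p q : ℕ → H),
    Coalgebra.comul (R := k) h = ∑ i ∈ s, p i ⊗ₜ[k] q i →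
    act h (a * b) = ∑ i ∈ s, act (p i) a * act (q i) b) ∧
  (∀ h : H, act h 1 = Coalgebra.counit (R := k) h • (1 : A)) ∧
  (coact 1 = (1 : A) ⊗ₜ[k] (1 : H)) ∧
  (∀ (a b : A) (s t : Finset ℕ) (a₀ : ℕ → A) (a₁ : ℕ → H) (b₀ : ℕ → A) (b₁ : ℕ → H),
    coact a = ∑ i ∈ s, a₀ i ⊗ₜ[k] a₁ i →
    coact b = ∑ j ∈ t, b₀ j ⊗ₜ[k] b₁ j →
    coact (a * b) = ∑ i ∈ s, ∑ j ∈ t, (a₀ i * b₀ j) ⊗ₜ[k] (b₁ j * a₁ i))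

/-- Characterization of the smash product multiplication
`(a # b)(a' # b') = a a'₍₀₎ # (a'₍₁₎ · b) b'` on `A ⊗ B`. -/
def SmashMulChar {A B : Type} [Ring A] [Algebra k A] [Ring B] [Algebra k B]
    (actB : H →ₗ[k] B →ₗ[k] B) (coactA : A →ₗ[k] A ⊗[k] H)
    (mul : (A ⊗[k] B) →ₗ[k] (A ⊗[k] B) →ₗ[k] (A ⊗[k] B)) : Prop :=
  ∀ (a a' : A) (b b' : B) (t : Finset ℕ) (a₀ : ℕ → A) (a₁ : ℕ → H),
    coactA a' = ∑ j ∈ t, a₀ j ⊗ₜ[k] a₁ j →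
    mul (a ⊗ₜ[k] b) (a' ⊗ₜ[k] b') = ∑ j ∈ t, (a * a₀ j) ⊗ₜ[k] (actB (a₁ j) b * b')

end GYD


namespace GYDAux

open TensorProduct

variable (k : Type) [Field k]

lemma exists_rep {A B : Type} [AddCommGroup A] [Module k A] [AddCommGroup B] [Module k B]
    (x : A ⊗[k] B) : ∃ (s : Finset ℕ) (a : ℕ → A) (b : ℕ → B), x = ∑ i ∈ s, a i ⊗ₜ[k] b i := by
  obtain ⟨S, hS⟩ := TensorProduct.exists_finset (R := k) x
  classical
  refine ⟨Finset.range S.card,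
    fun i => if h : i < S.card then (S.equivFin.symm ⟨i, h⟩ : A × B).1 else 0,
    fun i => if h : i < S.card then (S.equivFin.symm ⟨i, h⟩ : A × B).2 else 0, ?_⟩
  rw [hS, ← Finset.sum_coe_sort S (fun p => p.1 ⊗ₜ[k] p.2),
    ← Equiv.sum_comp S.equivFin.symm (fun p => (p : A × B).1 ⊗ₜ[k] (p : A × B).2),
    ← Fin.sum_univ_eq_sum_range]
  apply Finset.sum_congr rfl
  intro i _
  simp [i.isLt]

lemma tensor_eq_sum_basis {V B : Type} [AddCommGroup V] [Module k V]
    [AddCommGroup B] [Module k B] {ι : Type*} [Fintype ι] (b : Module.Basis ι k V) (Z : V ⊗[k] B) :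
    Z = ∑ i, b i ⊗ₜ[k] (TensorProduct.lid k B (LinearMap.rTensor B (b.coord i) Z)) := by
  induction Z using TensorProduct.induction_on with
  | zero => simp
  | tmul v h =>
    simp only [LinearMap.rTensor_tmul, TensorProduct.lid_tmul]
    conv_lhs => rw [← b.sum_repr v, TensorProduct.sum_tmul]
    refine Finset.sum_congr rfl fun i _ => ?_
    rw [TensorProduct.smul_tmul, TensorProduct.tmul_smul]
    simp [Module.Basis.coord_apply]
  | add x y hx hy =>
    conv_lhs => rw [hx, hy]
    rw [← Finset.sum_add_distrib]
    refine Finset.sum_congr rfl fun i _ => ?_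
    rw [map_add, map_add, TensorProduct.tmul_add]

lemma sep_dual {V B : Type} [AddCommGroup V] [Module k V] [FiniteDimensional k V]
    [AddCommGroup B] [Module k B] (Z Z' : V ⊗[k] B)
    (h : ∀ ξ : Module.Dual k V, LinearMap.rTensor B ξ Z = LinearMap.rTensor B ξ Z') :
    Z = Z' := by
  rw [tensor_eq_sum_basis k (Module.finBasis k V) Z,
      tensor_eq_sum_basis k (Module.finBasis k V) Z']
  refine Finset.sum_congr rfl fun i _ => ?_
  rw [h]

lemma rTensor_finsum {A A' B : Type} [AddCommGroup A] [Module k A] [AddCommGroup A']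
    [Module k A'] [AddCommGroup B] [Module k B] {ι : Type*} (s : Finset ι)
    (g : ι → (A →ₗ[k] A')) :
    LinearMap.rTensor B (∑ i ∈ s, g i) = ∑ i ∈ s, LinearMap.rTensor B (g i) := by
  classical
  induction s using Finset.induction_on with
  | empty => simp [LinearMap.rTensor_zero]
  | insert _ _ hni ih =>
    rw [Finset.sum_insert hni, Finset.sum_insert hni, LinearMap.rTensor_add, ih]

lemma sep_end {W B : Type} [AddCommGroup W] [Module k W] [FiniteDimensional k W]
    [AddCommGroup B] [Module k B] (X Y : Module.End k W ⊗[k] B)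
    (h : ∀ f : W, LinearMap.rTensor B (LinearMap.applyₗ (R := k) f) X
       = LinearMap.rTensor B (LinearMap.applyₗ (R := k) f) Y) : X = Y := by
  classical
  apply sep_dual k
  intro ξ
  set b := Module.finBasis k W with hb
  have expand : ∀ u : Module.End k W,
      u = ∑ i, ∑ j, (b.coord i (u (b j))) • ((b.coord j).smulRight (b i)) := by
    intro u
    apply LinearMap.ext
    intro w
    simp only [LinearMap.sum_apply, LinearMap.smul_apply, LinearMap.coe_smulRight,
      Module.Basis.coord_apply]
    rw [Finset.sum_comm]
    conv_lhs => rw [← b.sum_repr w]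
    rw [map_sum]
    refine Finset.sum_congr rfl fun j _ => ?_
    rw [map_smul]
    conv_lhs => rw [← b.sum_repr (u (b j))]
    rw [Finset.smul_sum]
    refine Finset.sum_congr rfl fun i _ => ?_
    rw [smul_comm]
  have hξ : ξ = ∑ i, ∑ j, ξ ((b.coord j).smulRight (b i)) •
      ((b.coord i) ∘ₗ (LinearMap.applyₗ (R := k) (b j) : Module.End k W →ₗ[k] W)) := by
    apply LinearMap.ext
    intro u
    conv_lhs => rw [expand u]
    rw [map_sum]
    simp only [LinearMap.sum_apply, LinearMap.smul_apply, LinearMap.coe_comp,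
      Function.comp_apply, LinearMap.applyₗ_apply_apply, map_sum, map_smul]
    refine Finset.sum_congr rfl fun i _ => Finset.sum_congr rfl fun j _ => ?_
    simp only [smul_eq_mul]
    exact mul_comm _ _
  rw [hξ, rTensor_finsum]
  rw [Finset.sum_congr rfl fun i _ => rTensor_finsum k Finset.univ
    (fun j => ξ ((b.coord j).smulRight (b i)) •
      ((b.coord i) ∘ₗ (LinearMap.applyₗ (R := k) (b j) : Module.End k W →ₗ[k] W)))]
  simp only [LinearMap.sum_apply]
  refine Finset.sum_congr rfl fun i _ => Finset.sum_congr rfl fun j _ => ?_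
  rw [LinearMap.rTensor_smul, LinearMap.rTensor_comp]
  simp only [LinearMap.smul_apply, LinearMap.coe_comp, Function.comp_apply]
  rw [h (b j)]

section Conv

variable {H : Type} [Ring H] [HopfAlgebra k H]

/-- convolution product on End(H) -/
def conv (f g : H →ₗ[k] H) : H →ₗ[k] H :=
  LinearMap.mul' k H ∘ₗ map f g ∘ₗ Coalgebra.comul

lemma conv_assoc (f g w : H →ₗ[k] H) : conv k (conv k f g) w = conv k f (conv k g w) := by
  have muassoc : (LinearMap.mul' k H) ∘ₗ map (LinearMap.mul' k H) LinearMap.id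
      = (LinearMap.mul' k H) ∘ₗ map LinearMap.id (LinearMap.mul' k H)
        ∘ₗ (TensorProduct.assoc k H H H).toLinearMap := by
    apply TensorProduct.ext_threefold
    intro x y z
    simp [mul_assoc]
  have expandL : map ((LinearMap.mul' k H) ∘ₗ map f g ∘ₗ Coalgebra.comul) w
      = map (LinearMap.mul' k H) LinearMap.id ∘ₗ map (map f g) w
        ∘ₗ map (Coalgebra.comul (R := k)) LinearMap.id := by
    rw [← TensorProduct.map_comp, ← TensorProduct.map_comp]
    simp [LinearMap.comp_assoc]
  have expandR : map f ((LinearMap.mul' k H) ∘ₗ map g w ∘ₗ Coalgebra.comul)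
      = map LinearMap.id (LinearMap.mul' k H) ∘ₗ map f (map g w)
        ∘ₗ map LinearMap.id (Coalgebra.comul (R := k)) := by
    rw [← TensorProduct.map_comp, ← TensorProduct.map_comp]
    simp [LinearMap.comp_assoc]
  have natural : (TensorProduct.assoc k H H H).toLinearMap ∘ₗ map (map f g) w
      = map f (map g w) ∘ₗ (TensorProduct.assoc k H H H).toLinearMap :=
    (TensorProduct.map_map_comp_assoc_eq f g w).symm
  have coassoc' : (TensorProduct.assoc k H H H).toLinearMap
        ∘ₗ map (Coalgebra.comul (R := k)) LinearMap.id ∘ₗ Coalgebra.comul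
      = map LinearMap.id (Coalgebra.comul (R := k)) ∘ₗ Coalgebra.comul :=
    Coalgebra.coassoc
  unfold conv
  rw [expandL, expandR]
  calc LinearMap.mul' k H ∘ₗ (map (LinearMap.mul' k H) LinearMap.id ∘ₗ map (map f g) w
        ∘ₗ map (Coalgebra.comul (R := k)) LinearMap.id) ∘ₗ Coalgebra.comul
      = (LinearMap.mul' k H ∘ₗ map (LinearMap.mul' k H) LinearMap.id) ∘ₗ map (map f g) w
        ∘ₗ map (Coalgebra.comul (R := k)) LinearMap.id ∘ₗ Coalgebra.comul := by
        simp only [LinearMap.comp_assoc]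
    _ = LinearMap.mul' k H ∘ₗ map LinearMap.id (LinearMap.mul' k H)
        ∘ₗ ((TensorProduct.assoc k H H H).toLinearMap ∘ₗ map (map f g) w)
        ∘ₗ map (Coalgebra.comul (R := k)) LinearMap.id ∘ₗ Coalgebra.comul := by
        rw [muassoc]; simp only [LinearMap.comp_assoc]
    _ = LinearMap.mul' k H ∘ₗ map LinearMap.id (LinearMap.mul' k H)
        ∘ₗ map f (map g w)
        ∘ₗ (TensorProduct.assoc k H H H).toLinearMap
        ∘ₗ map (Coalgebra.comul (R := k)) LinearMap.id ∘ₗ Coalgebra.comul := by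
        rw [natural]; simp only [LinearMap.comp_assoc]
    _ = LinearMap.mul' k H ∘ₗ map LinearMap.id (LinearMap.mul' k H)
        ∘ₗ map f (map g w)
        ∘ₗ map LinearMap.id (Coalgebra.comul (R := k)) ∘ₗ Coalgebra.comul := by
        rw [coassoc']
    _ = LinearMap.mul' k H ∘ₗ (map LinearMap.id (LinearMap.mul' k H)
        ∘ₗ map f (map g w)
        ∘ₗ map LinearMap.id (Coalgebra.comul (R := k))) ∘ₗ Coalgebra.comul := by
        simp only [LinearMap.comp_assoc]

/-- convolution unit -/
def cunit : H →ₗ[k] H := Algebra.linearMap k H ∘ₗ Coalgebra.counit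

lemma conv_unit_right (f : H →ₗ[k] H) : conv k f (cunit k) = f := by
  unfold conv cunit
  have : map f (Algebra.linearMap k H ∘ₗ Coalgebra.counit (R := k) (A := H))
      = map f (Algebra.linearMap k H) ∘ₗ map (LinearMap.id : H →ₗ[k] H)
          (Coalgebra.counit (R := k)) := by
    rw [← TensorProduct.map_comp]; simp
  rw [this]
  apply LinearMap.ext; intro h
  have := Coalgebra.lTensor_counit_comul (R := k) h
  simp only [LinearMap.comp_apply]
  rw [show (map (LinearMap.id : H →ₗ[k] H) (Coalgebra.counit (R := k)))
        (Coalgebra.comul (R := k) h)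
      = LinearMap.lTensor H (Coalgebra.counit (R := k)) (Coalgebra.comul (R := k) h) from rfl,
    this]
  simp [Algebra.algebraMap_eq_smul_one]

lemma conv_unit_left (f : H →ₗ[k] H) : conv k (cunit k) f = f := by
  unfold conv cunit
  have : map (Algebra.linearMap k H ∘ₗ Coalgebra.counit (R := k) (A := H)) f
      = map (Algebra.linearMap k H) f ∘ₗ map (Coalgebra.counit (R := k))
          (LinearMap.id : H →ₗ[k] H) := by
    rw [← TensorProduct.map_comp]; simp
  rw [this]
  apply LinearMap.ext; intro h
  have := Coalgebra.rTensor_counit_comul (R := k) h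
  simp only [LinearMap.comp_apply]
  rw [show (map (Coalgebra.counit (R := k)) (LinearMap.id : H →ₗ[k] H))
        (Coalgebra.comul (R := k) h)
      = LinearMap.rTensor H (Coalgebra.counit (R := k)) (Coalgebra.comul (R := k) h) from rfl,
    this]
  simp [Algebra.algebraMap_eq_smul_one]

lemma antipode_comm (φ : H ≃ₗ[k] H)
    (hmul : ∀ x y : H, φ (x * y) = φ x * φ y) (hone : φ 1 = 1)
    (hcomul : ∀ h : H, Coalgebra.comul (R := k) (φ h)
      = TensorProduct.map φ.toLinearMap φ.toLinearMap (Coalgebra.comul (R := k) h))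
    (hcounit : ∀ h : H, Coalgebra.counit (R := k) (φ h) = Coalgebra.counit (R := k) h) :
    ∀ h : H, HopfAlgebra.antipode (R := k) (φ h) = φ (HopfAlgebra.antipode (R := k) h) := by
  set S := HopfAlgebra.antipode (R := k) (A := H) with hSdef
  have key : S ∘ₗ φ.toLinearMap = φ.toLinearMap ∘ₗ S := by
    have comulφ : Coalgebra.comul (R := k) ∘ₗ φ.toLinearMap
        = map φ.toLinearMap φ.toLinearMap ∘ₗ Coalgebra.comul := LinearMap.ext hcomul
    have mulφ : LinearMap.mul' k H ∘ₗ map φ.toLinearMap φ.toLinearMap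
        = φ.toLinearMap ∘ₗ LinearMap.mul' k H := by
      apply TensorProduct.ext'
      intro x y
      simp [hmul]
    have counitφ : Coalgebra.counit (R := k) ∘ₗ φ.toLinearMap
        = Coalgebra.counit (R := k) (A := H) := LinearMap.ext hcounit
    have uφ : φ.toLinearMap ∘ₗ cunit k = cunit k (H := H) := by
      apply LinearMap.ext
      intro h
      simp [cunit, Algebra.algebraMap_eq_smul_one, hone]
    have e1 : conv k (S ∘ₗ φ.toLinearMap) φ.toLinearMap = cunit k := by
      unfold conv
      have : map (S ∘ₗ φ.toLinearMap) φ.toLinearMap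
          = map S (LinearMap.id : H →ₗ[k] H) ∘ₗ map φ.toLinearMap φ.toLinearMap := by
        rw [← TensorProduct.map_comp, LinearMap.id_comp]
      rw [this, LinearMap.comp_assoc, ← comulφ]
      rw [show map S (LinearMap.id : H →ₗ[k] H) = LinearMap.rTensor H S from rfl]
      rw [← LinearMap.comp_assoc, ← LinearMap.comp_assoc]
      rw [LinearMap.comp_assoc (Coalgebra.comul) (LinearMap.rTensor H S) (LinearMap.mul' k H),
        HopfAlgebra.mul_antipode_rTensor_comul]
      unfold cunit
      rw [LinearMap.comp_assoc, counitφ]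
    have e2 : conv k φ.toLinearMap (φ.toLinearMap ∘ₗ S) = cunit k := by
      unfold conv
      have : map φ.toLinearMap (φ.toLinearMap ∘ₗ S)
          = map φ.toLinearMap φ.toLinearMap ∘ₗ map (LinearMap.id : H →ₗ[k] H) S := by
        rw [← TensorProduct.map_comp, LinearMap.comp_id]
      rw [this]
      rw [show LinearMap.mul' k H ∘ₗ (map φ.toLinearMap φ.toLinearMap
            ∘ₗ map (LinearMap.id : H →ₗ[k] H) S) ∘ₗ Coalgebra.comul
          = (LinearMap.mul' k H ∘ₗ map φ.toLinearMap φ.toLinearMap)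
            ∘ₗ map (LinearMap.id : H →ₗ[k] H) S ∘ₗ Coalgebra.comul by
        simp only [LinearMap.comp_assoc]]
      rw [mulφ]
      rw [show map (LinearMap.id : H →ₗ[k] H) S = LinearMap.lTensor H S from rfl]
      rw [LinearMap.comp_assoc, HopfAlgebra.mul_antipode_lTensor_comul]
      exact uφ
    calc S ∘ₗ φ.toLinearMap
        = conv k (S ∘ₗ φ.toLinearMap) (cunit k) := (conv_unit_right k _).symm
      _ = conv k (S ∘ₗ φ.toLinearMap) (conv k φ.toLinearMap (φ.toLinearMap ∘ₗ S)) := by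
          rw [e2]
      _ = conv k (conv k (S ∘ₗ φ.toLinearMap) φ.toLinearMap) (φ.toLinearMap ∘ₗ S) :=
          (conv_assoc k _ _ _).symm
      _ = conv k (cunit k) (φ.toLinearMap ∘ₗ S) := by rw [e1]
      _ = φ.toLinearMap ∘ₗ S := conv_unit_left k _
  intro h
  exact LinearMap.congr_fun key h

end Conv

end GYDAux

theorem statement_15
    (k H : Type) [Field k] [Ring H] [HopfAlgebra k H]
    (Sinv : H → H) (hS : GYD.IsAntipodeInv k H Sinv)
    (α β : H ≃ₗ[k] H)
    (hα : GYD.IsHopfAut k H α) (hβ : GYD.IsHopfAut k H β)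
    (M : Type) [AddCommGroup M] [Module k M] [FiniteDimensional k M]
    (actM : H →ₗ[k] M →ₗ[k] M) (coactM : M →ₗ[k] M ⊗[k] H)
    (hM : GYD.IsYD k H Sinv ⇑α ⇑β actM coactM)
    -- End(M)^op
    (actO : H →ₗ[k] (Module.End k M)ᵐᵒᵖ →ₗ[k] (Module.End k M)ᵐᵒᵖ)
    (coactO : (Module.End k M)ᵐᵒᵖ →ₗ[k] (Module.End k M)ᵐᵒᵖ ⊗[k] H)
    (hactO : GYD.EndOpActChar k H ⇑β.symm Sinv actM actO)
    (hcoactO : GYD.EndOpCoactChar k H coactM coactO)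
    -- the right dual ◇M, a (β, α)-Yetter-Drinfeld module
    (actD : H →ₗ[k] Module.Dual k M →ₗ[k] Module.Dual k M)
    (coactD : Module.Dual k M →ₗ[k] Module.Dual k M ⊗[k] H)
    (hactD : GYD.DualActChar k H Sinv actM actD)
    (hcoactD : GYD.DualCoactChar k H (fun h => HopfAlgebra.antipode (R := k) h) coactM coactD)
    -- End(◇M)
    (actED : H →ₗ[k] Module.End k (Module.Dual k M) →ₗ[k] Module.End k (Module.Dual k M))
    (coactED : Module.End k (Module.Dual k M) →ₗ[k] Module.End k (Module.Dual k M) ⊗[k] H)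
    (hactED : GYD.EndActChar k H ⇑β.symm actD actED)
    (hcoactED : GYD.EndCoactChar k H Sinv coactD coactED)
    -- the transpose map ι(u)(f) = f ∘ u
    (ι : (Module.End k M)ᵐᵒᵖ →ₗ[k] Module.End k (Module.Dual k M))
    (hι : ∀ (u : (Module.End k M)ᵐᵒᵖ) (f : Module.Dual k M) (m : M),
        ι u f m = f (u.unop m)) :
    Function.Bijective ι ∧
    (∀ u v : (Module.End k M)ᵐᵒᵖ, ι (u * v) = ι u * ι v) ∧
    ι 1 = 1 ∧
    (∀ (h : H) (u : (Module.End k M)ᵐᵒᵖ), ι (actO h u) = actED h (ι u)) ∧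
    (∀ u : (Module.End k M)ᵐᵒᵖ, coactED (ι u) = LinearMap.rTensor H ι (coactO u)) := by
  classical
  -- antipode commutes with β and β.symm
  have hβS : ∀ x : H, HopfAlgebra.antipode (R := k) (β x) = β (HopfAlgebra.antipode (R := k) x) :=
    GYDAux.antipode_comm k β hβ.1 hβ.2.1 hβ.2.2.1 hβ.2.2.2
  have hβsS : ∀ x : H, HopfAlgebra.antipode (R := k) (β.symm x)
      = β.symm (HopfAlgebra.antipode (R := k) x) := by
    intro x
    apply β.injective
    rw [← hβS, β.apply_symm_apply, β.apply_symm_apply]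
  have key2 : ∀ x : H, Sinv (β.symm x) = β.symm (Sinv x) := by
    intro x
    conv_lhs => rw [← hS.1 x]
    rw [← hβsS, hS.2]
  have key1 : ∀ x : H, Sinv (β.symm (HopfAlgebra.antipode (R := k) x)) = β.symm x := by
    intro x; rw [← hβsS, hS.2]
  have hSinj : Function.Injective (HopfAlgebra.antipode (R := k) (A := H)) := by
    intro a b hab
    have := congrArg Sinv hab
    rwa [hS.2, hS.2] at this
  have hSinv_sum : ∀ (t : Finset ℕ) (c : ℕ → k) (y : ℕ → H),
      Sinv (∑ i ∈ t, c i • y i) = ∑ i ∈ t, c i • Sinv (y i) := by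
    intro t c y
    apply hSinj
    rw [hS.1, map_sum]
    refine (Finset.sum_congr rfl fun i _ => ?_).symm
    rw [map_smul, hS.1]
  refine ⟨⟨?_, ?_⟩, ?_, ?_, ?_, ?_⟩
  · -- injective
    intro u v huv
    apply MulOpposite.unop_injective
    apply LinearMap.ext
    intro m
    rw [← sub_eq_zero]
    rw [show u.unop m - v.unop m = (u.unop - v.unop) m from rfl]
    rw [← (Module.forall_dual_apply_eq_zero_iff k ((u.unop - v.unop) m))]
    intro φ
    have h1 := hι u φ m
    have h2 := hι v φ m
    rw [huv] at h1
    rw [LinearMap.sub_apply, map_sub, ← h1, ← h2, sub_self]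
  · -- surjective
    intro w
    refine ⟨MulOpposite.op ((Module.evalEquiv k M).symm.toLinearMap ∘ₗ w.dualMap
      ∘ₗ (Module.evalEquiv k M).toLinearMap), ?_⟩
    apply LinearMap.ext; intro f
    apply LinearMap.ext; intro m
    rw [hι]
    simp only [MulOpposite.unop_op, LinearMap.coe_comp, Function.comp_apply,
      LinearEquiv.coe_coe, Module.apply_evalEquiv_symm_apply, LinearMap.dualMap_apply,
      Module.evalEquiv_apply, Module.Dual.eval_apply]
  · -- multiplicative
    intro u v
    apply LinearMap.ext; intro f
    apply LinearMap.ext; intro m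
    rw [hι]
    rw [show (u * v).unop = v.unop * u.unop from rfl]
    rw [show (v.unop * u.unop) m = v.unop (u.unop m) from rfl]
    rw [show (ι u * ι v) f = ι u (ι v f) from rfl]
    rw [hι, hι]
  · -- unital
    apply LinearMap.ext; intro f
    apply LinearMap.ext; intro m
    rw [hι]
    rfl
  · -- H-linear
    intro h u
    obtain ⟨s, p, q, hpq⟩ := GYDAux.exists_rep k (Coalgebra.comul (R := k) h)
    apply LinearMap.ext; intro f
    apply LinearMap.ext; intro m
    rw [hι, hactO h u m s p q hpq, hactED h (ι u) f s p q hpq, map_sum,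
      LinearMap.sum_apply]
    refine Finset.sum_congr rfl fun i _ => ?_
    rw [hactD, hι, hactD, key1, key2]
  · -- H-colinear
    intro u
    apply GYDAux.sep_end k
    intro f
    apply GYDAux.sep_dual k
    intro ξ
    obtain ⟨m, rfl⟩ : ∃ m : M, ξ = Module.Dual.eval k M m :=
      ⟨(Module.evalEquiv k M).symm ξ, by
        rw [← Module.evalEquiv_apply, (Module.evalEquiv k M).apply_symm_apply]⟩
    apply (TensorProduct.lid k H).injective
    -- representations
    obtain ⟨t, m₀, m₁, hm⟩ := GYDAux.exists_rep k (coactM m)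
    choose r n₀ n₁ hn using fun p => GYDAux.exists_rep k (coactM (u.unop (m₀ p)))
    obtain ⟨t', f₀, f₁, hf⟩ := GYDAux.exists_rep k (coactD f)
    choose r' g₀ g₁ hg using fun j => GYDAux.exists_rep k (coactD ((ι u) (f₀ j)))
    -- left-hand side
    have hL := hcoactED (ι u) f t' f₀ f₁ r' g₀ g₁ hf (fun j _ => hg j)
    -- inner coactD contractions
    have claim1 : ∀ j : ℕ, ∑ l ∈ r' j, (g₀ j l) m • g₁ j l
        = ∑ p ∈ t, f₀ j (u.unop (m₀ p)) • HopfAlgebra.antipode (R := k) (m₁ p) := by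
      intro j
      have h1 := hcoactD ((ι u) (f₀ j)) m t m₀ m₁ hm
      rw [hg j] at h1
      rw [map_sum] at h1
      simp only [LinearMap.rTensor_tmul, TensorProduct.lid_tmul, map_sum,
        Module.Dual.eval_apply] at h1
      rw [h1]
      refine Finset.sum_congr rfl fun p _ => ?_
      rw [hι]
    have claim2 : ∀ p : ℕ, ∑ j ∈ t', f₀ j (u.unop (m₀ p)) • Sinv (f₁ j)
        = ∑ q ∈ r p, f (n₀ p q) • n₁ p q := by
      intro p
      rw [← hSinv_sum]
      have h2 := hcoactD f (u.unop (m₀ p)) (r p) (n₀ p) (n₁ p) (hn p)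
      rw [hf, map_sum] at h2
      simp only [LinearMap.rTensor_tmul, TensorProduct.lid_tmul, map_sum,
        Module.Dual.eval_apply] at h2
      rw [h2, hSinv_sum]
      refine Finset.sum_congr rfl fun q _ => ?_
      rw [hS.2]
    -- compute LHS
    have hLHS : TensorProduct.lid k H (LinearMap.rTensor H (Module.Dual.eval k M m)
        (LinearMap.rTensor H (LinearMap.applyₗ (R := k) f) (coactED (ι u))))
        = ∑ p ∈ t, ∑ q ∈ r p, f (n₀ p q) •
            (n₁ p q * HopfAlgebra.antipode (R := k) (m₁ p)) := by
      rw [hL, map_sum, map_sum]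
      simp only [map_sum, LinearMap.rTensor_tmul, TensorProduct.lid_tmul,
        Module.Dual.eval_apply]
      have step : ∀ j ∈ t', ∑ l ∈ r' j, (g₀ j l) m • (Sinv (f₁ j) * g₁ j l)
          = ∑ p ∈ t, f₀ j (u.unop (m₀ p)) •
              (Sinv (f₁ j) * HopfAlgebra.antipode (R := k) (m₁ p)) := by
        intro j _
        calc ∑ l ∈ r' j, (g₀ j l) m • (Sinv (f₁ j) * g₁ j l)
            = ∑ l ∈ r' j, Sinv (f₁ j) * ((g₀ j l) m • g₁ j l) :=
              Finset.sum_congr rfl fun l _ => (mul_smul_comm _ _ _).symm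
          _ = Sinv (f₁ j) * ∑ l ∈ r' j, (g₀ j l) m • g₁ j l := (Finset.mul_sum _ _ _).symm
          _ = Sinv (f₁ j) * ∑ p ∈ t, f₀ j (u.unop (m₀ p)) •
                HopfAlgebra.antipode (R := k) (m₁ p) := by rw [claim1 j]
          _ = ∑ p ∈ t, Sinv (f₁ j) * (f₀ j (u.unop (m₀ p)) •
                HopfAlgebra.antipode (R := k) (m₁ p)) := Finset.mul_sum _ _ _
          _ = ∑ p ∈ t, f₀ j (u.unop (m₀ p)) •
                (Sinv (f₁ j) * HopfAlgebra.antipode (R := k) (m₁ p)) :=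
              Finset.sum_congr rfl fun p _ => mul_smul_comm _ _ _
      rw [Finset.sum_congr rfl step, Finset.sum_comm]
      refine Finset.sum_congr rfl fun p _ => ?_
      calc ∑ j ∈ t', f₀ j (u.unop (m₀ p)) •
            (Sinv (f₁ j) * HopfAlgebra.antipode (R := k) (m₁ p))
          = ∑ j ∈ t', (f₀ j (u.unop (m₀ p)) • Sinv (f₁ j)) *
              HopfAlgebra.antipode (R := k) (m₁ p) :=
            Finset.sum_congr rfl fun j _ => (smul_mul_assoc _ _ _).symm
        _ = (∑ j ∈ t', f₀ j (u.unop (m₀ p)) • Sinv (f₁ j)) *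
              HopfAlgebra.antipode (R := k) (m₁ p) := (Finset.sum_mul _ _ _).symm
        _ = (∑ q ∈ r p, f (n₀ p q) • n₁ p q) *
              HopfAlgebra.antipode (R := k) (m₁ p) := by rw [claim2 p]
        _ = ∑ q ∈ r p, (f (n₀ p q) • n₁ p q) *
              HopfAlgebra.antipode (R := k) (m₁ p) := Finset.sum_mul _ _ _
        _ = ∑ q ∈ r p, f (n₀ p q) •
              (n₁ p q * HopfAlgebra.antipode (R := k) (m₁ p)) :=
            Finset.sum_congr rfl fun q _ => smul_mul_assoc _ _ _
    -- compute RHS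
    have hO := hcoactO u m t m₀ m₁ r n₀ n₁ hm (fun p _ => hn p)
    have hRHS : TensorProduct.lid k H (LinearMap.rTensor H (Module.Dual.eval k M m)
        (LinearMap.rTensor H (LinearMap.applyₗ (R := k) f)
          (LinearMap.rTensor H ι (coactO u))))
        = ∑ p ∈ t, ∑ q ∈ r p, f (n₀ p q) •
            (n₁ p q * HopfAlgebra.antipode (R := k) (m₁ p)) := by
      rw [← LinearMap.rTensor_comp_apply, ← LinearMap.rTensor_comp_apply]
      have hcomp : ((Module.Dual.eval k M m) ∘ₗ (LinearMap.applyₗ (R := k) f)) ∘ₗ ι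
          = f ∘ₗ ((LinearMap.applyₗ (R := k) m).comp
              (MulOpposite.opLinearEquiv k (M := Module.End k M)).symm.toLinearMap) := by
        apply LinearMap.ext
        intro v
        exact hι v f m
      rw [hcomp, LinearMap.rTensor_comp, LinearMap.comp_apply, hO, map_sum]
      simp only [map_sum, LinearMap.rTensor_tmul, TensorProduct.lid_tmul]
    rw [hLHS, hRHS]

end
end

section
/- Let N be a finite-dimensional (γ,δ)-Yetter-Drinfeld module and α, β ∈ Aut_Hopf(H). Then End(^{(α,β)}N) = End(N)(βα⁻¹) as algebras in _H𝒴𝒟^H: the two algebras coincide, and their left H-actions and right H-coactions agree. -/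
open TensorProduct

noncomputable section

namespace GYDProofAux

open TensorProduct LinearMap Coalgebra HopfAlgebra

variable {k H : Type} [Field k] [Ring H] [HopfAlgebra k H]

set_option synthInstance.maxHeartbeats 1000000
set_option maxHeartbeats 1000000

/-- Convolution product on `H →ₗ[k] H`. -/
noncomputable def conv (f g : H →ₗ[k] H) : H →ₗ[k] H :=
  LinearMap.mul' k H ∘ₗ TensorProduct.map f g ∘ₗ Coalgebra.comul

lemma conv_apply_repr (f g : H →ₗ[k] H) {a : H} {ι : Type*} (r : Coalgebra.Repr k a ι) :
    conv f g a = ∑ i ∈ r.index, f (r.left i) * g (r.right i) := by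
  simp [conv, ← r.eq, map_sum, LinearMap.mul'_apply]

lemma sum_counit_smul {a : H} {ι : Type*} (r : Coalgebra.Repr k a ι) :
    ∑ i ∈ r.index, Coalgebra.counit (R := k) (r.left i) • r.right i = a := by
  have h1 : ∑ i ∈ r.index, Coalgebra.counit (R := k) (r.left i) • r.right i
      = TensorProduct.lid k H
          (∑ i ∈ r.index, Coalgebra.counit (R := k) (r.left i) ⊗ₜ[k] r.right i) := by
    rw [map_sum]
    exact Finset.sum_congr rfl fun i _ => by rw [TensorProduct.lid_tmul]
  rw [h1, Coalgebra.sum_counit_tmul_eq]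
  simp

lemma sum_smul_counit {a : H} {ι : Type*} (r : Coalgebra.Repr k a ι) :
    ∑ i ∈ r.index, Coalgebra.counit (R := k) (r.right i) • r.left i = a := by
  have h1 : ∑ i ∈ r.index, Coalgebra.counit (R := k) (r.right i) • r.left i
      = TensorProduct.rid k H
          (∑ i ∈ r.index, r.left i ⊗ₜ[k] Coalgebra.counit (R := k) (r.right i)) := by
    rw [map_sum]
    exact Finset.sum_congr rfl fun i _ => by rw [TensorProduct.rid_tmul]
  rw [h1, Coalgebra.sum_tmul_counit_eq]
  simp

lemma conv_counit_left (f : H →ₗ[k] H) :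
    conv ((Algebra.linearMap k H) ∘ₗ Coalgebra.counit) f = f := by
  ext a
  classical
  set r := Coalgebra.Repr.arbitrary k a
  rw [conv_apply_repr _ _ r]
  calc ∑ i ∈ r.index,
        (Algebra.linearMap k H ∘ₗ Coalgebra.counit) (r.left i) * f (r.right i)
      = ∑ i ∈ r.index, f (Coalgebra.counit (R := k) (r.left i) • r.right i) := by
        refine Finset.sum_congr rfl fun i _ => ?_
        rw [LinearMap.comp_apply, Algebra.linearMap_apply, ← Algebra.smul_def, ← map_smul]
    _ = f a := by rw [← map_sum, sum_counit_smul]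

lemma conv_counit_right (f : H →ₗ[k] H) :
    conv f ((Algebra.linearMap k H) ∘ₗ Coalgebra.counit) = f := by
  ext a
  classical
  set r := Coalgebra.Repr.arbitrary k a
  rw [conv_apply_repr _ _ r]
  calc ∑ i ∈ r.index,
        f (r.left i) * (Algebra.linearMap k H ∘ₗ Coalgebra.counit) (r.right i)
      = ∑ i ∈ r.index, f (Coalgebra.counit (R := k) (r.right i) • r.left i) := by
        refine Finset.sum_congr rfl fun i _ => ?_
        rw [LinearMap.comp_apply, Algebra.linearMap_apply, ← Algebra.commutes,
          ← Algebra.smul_def, ← map_smul]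
    _ = f a := by rw [← map_sum, sum_smul_counit]

lemma conv_assoc (f g h : H →ₗ[k] H) : conv (conv f g) h = conv f (conv g h) := by
  ext a
  have e1 : TensorProduct.map (conv f g) h
      = TensorProduct.map (LinearMap.mul' k H ∘ₗ TensorProduct.map f g) h
          ∘ₗ (Coalgebra.comul (R := k) (A := H)).rTensor H := by
    apply TensorProduct.ext'
    intro x y
    simp [conv, LinearMap.rTensor]
  have e2 : TensorProduct.map f (conv g h)
      = TensorProduct.map f (LinearMap.mul' k H ∘ₗ TensorProduct.map g h)
          ∘ₗ (Coalgebra.comul (R := k) (A := H)).lTensor H := by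
    apply TensorProduct.ext'
    intro x y
    simp [conv, LinearMap.lTensor]
  have key : ∀ z : H ⊗[k] (H ⊗[k] H),
      LinearMap.mul' k H (TensorProduct.map (LinearMap.mul' k H ∘ₗ TensorProduct.map f g) h
        ((TensorProduct.assoc k H H H).symm z))
      = LinearMap.mul' k H (TensorProduct.map f (LinearMap.mul' k H ∘ₗ TensorProduct.map g h) z) := by
    intro z
    induction z using TensorProduct.induction_on with
    | zero => simp
    | tmul x w =>
      induction w using TensorProduct.induction_on with
      | zero => simp
      | tmul y z => simp [TensorProduct.assoc_symm_tmul, LinearMap.mul'_apply, mul_assoc]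
      | add w₁ w₂ h₁ h₂ => simp only [TensorProduct.tmul_add, map_add, h₁, h₂]
    | add z₁ z₂ h₁ h₂ => simp only [map_add, h₁, h₂]
  show LinearMap.mul' k H (TensorProduct.map (conv f g) h (Coalgebra.comul a))
      = LinearMap.mul' k H (TensorProduct.map f (conv g h) (Coalgebra.comul a))
  rw [e1, e2]
  simp only [LinearMap.comp_apply]
  rw [← Coalgebra.coassoc_symm_apply (R := k) a, key]

lemma conv_antipode_left :
    conv (HopfAlgebra.antipode (R := k) (A := H)) LinearMap.id
      = (Algebra.linearMap k H) ∘ₗ Coalgebra.counit :=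
  HopfAlgebra.mul_antipode_rTensor_comul

lemma conv_antipode_right :
    conv LinearMap.id (HopfAlgebra.antipode (R := k) (A := H))
      = (Algebra.linearMap k H) ∘ₗ Coalgebra.counit :=
  HopfAlgebra.mul_antipode_lTensor_comul

lemma antipode_comm {φ : H ≃ₗ[k] H} (hφ : GYD.IsHopfAut k H φ) (a : H) :
    HopfAlgebra.antipode (R := k) (φ a) = φ (HopfAlgebra.antipode (R := k) a) := by
  classical
  set S : H →ₗ[k] H := HopfAlgebra.antipode (R := k) (A := H) with hSdef
  set E : H →ₗ[k] H := (Algebra.linearMap k H) ∘ₗ Coalgebra.counit with hEdef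
  have h1 : conv (φ.toLinearMap ∘ₗ S) φ.toLinearMap = E := by
    ext b
    set r := Coalgebra.Repr.arbitrary k b
    rw [conv_apply_repr _ _ r]
    calc ∑ i ∈ r.index, (φ.toLinearMap ∘ₗ S) (r.left i) * φ.toLinearMap (r.right i)
        = ∑ i ∈ r.index, φ (S (r.left i) * r.right i) := by
          refine Finset.sum_congr rfl fun i _ => ?_
          rw [hφ.1]
          rfl
      _ = φ (∑ i ∈ r.index, S (r.left i) * r.right i) := by rw [map_sum]
      _ = φ (algebraMap k H (Coalgebra.counit (R := k) b)) := by
          rw [HopfAlgebra.sum_antipode_mul_eq_algebraMap_counit r]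
      _ = E b := by
          simp [hEdef, Algebra.algebraMap_eq_smul_one, map_smul, hφ.2.1]
  have h2 : conv φ.toLinearMap (S ∘ₗ φ.toLinearMap) = E := by
    ext b
    set r := Coalgebra.Repr.arbitrary k b
    have hr' : ∑ i ∈ r.index, φ (r.left i) ⊗ₜ[k] φ (r.right i)
        = Coalgebra.comul (R := k) (φ b) := by
      rw [hφ.2.2.1 b, ← r.eq, map_sum]
      simp
    set r' : Coalgebra.Repr k (φ b) (H × H) :=
      { index := r.index, left := fun i => φ (r.left i),
        right := fun i => φ (r.right i), eq := hr' }
    rw [conv_apply_repr _ _ r]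
    calc ∑ i ∈ r.index, φ.toLinearMap (r.left i) * (S ∘ₗ φ.toLinearMap) (r.right i)
        = ∑ i ∈ r'.index, r'.left i * S (r'.right i) := by rfl
      _ = algebraMap k H (Coalgebra.counit (R := k) (φ b)) := HopfAlgebra.sum_mul_antipode_eq_algebraMap_counit r'
      _ = E b := by rw [hφ.2.2.2 b]; rfl
  have main : φ.toLinearMap ∘ₗ S = S ∘ₗ φ.toLinearMap := by
    calc φ.toLinearMap ∘ₗ S
        = conv (φ.toLinearMap ∘ₗ S) E := (conv_counit_right _).symm
      _ = conv (φ.toLinearMap ∘ₗ S) (conv φ.toLinearMap (S ∘ₗ φ.toLinearMap)) := by rw [h2]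
      _ = conv (conv (φ.toLinearMap ∘ₗ S) φ.toLinearMap) (S ∘ₗ φ.toLinearMap) :=
          (conv_assoc _ _ _).symm
      _ = conv E (S ∘ₗ φ.toLinearMap) := by rw [h1]
      _ = S ∘ₗ φ.toLinearMap := conv_counit_left _
  exact (LinearMap.congr_fun main a).symm

lemma sinv_comm {Sinv : H → H} (hS : GYD.IsAntipodeInv k H Sinv)
    {φ : H ≃ₗ[k] H} (hφ : GYD.IsHopfAut k H φ) (a : H) :
    Sinv (φ a) = φ (Sinv a) := by
  conv_lhs => rw [← hS.1 a]
  rw [← antipode_comm hφ, hS.2]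

lemma isHopfAut_symm {φ : H ≃ₗ[k] H} (hφ : GYD.IsHopfAut k H φ) :
    GYD.IsHopfAut k H φ.symm := by
  have map_cancel : ∀ x : H ⊗[k] H,
      TensorProduct.map φ.symm.toLinearMap φ.symm.toLinearMap
        (TensorProduct.map φ.toLinearMap φ.toLinearMap x) = x := by
    intro x
    induction x using TensorProduct.induction_on with
    | zero => simp
    | tmul a b => simp
    | add x y hx hy => simp only [map_add, hx, hy]
  refine ⟨fun x y => ?_, ?_, fun h => ?_, fun h => ?_⟩
  · apply φ.injective
    rw [φ.apply_symm_apply, hφ.1, φ.apply_symm_apply, φ.apply_symm_apply]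
  · apply φ.injective
    rw [φ.apply_symm_apply, hφ.2.1]
  · have h1 : Coalgebra.comul (R := k) h
        = TensorProduct.map φ.toLinearMap φ.toLinearMap
            (Coalgebra.comul (R := k) (φ.symm h)) := by
      conv_lhs => rw [← φ.apply_symm_apply h, hφ.2.2.1]
    rw [h1, map_cancel]
  · conv_rhs => rw [← φ.apply_symm_apply h, hφ.2.2.2]

lemma isHopfAut_trans {φ ψ : H ≃ₗ[k] H} (hφ : GYD.IsHopfAut k H φ)
    (hψ : GYD.IsHopfAut k H ψ) : GYD.IsHopfAut k H (φ.trans ψ) := by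
  refine ⟨fun x y => ?_, ?_, fun h => ?_, fun h => ?_⟩
  · show ψ (φ (x * y)) = ψ (φ x) * ψ (φ y)
    rw [hφ.1, hψ.1]
  · show ψ (φ 1) = 1
    rw [hφ.2.1, hψ.2.1]
  · show Coalgebra.comul (R := k) (ψ (φ h)) = _
    rw [hψ.2.2.1, hφ.2.2.1, ← LinearMap.comp_apply, ← TensorProduct.map_comp]
    rfl
  · show Coalgebra.counit (R := k) (ψ (φ h)) = _
    rw [hψ.2.2.2, hφ.2.2.2]

lemma exists_rep {M : Type} [AddCommGroup M] [Module k M] (x : M ⊗[k] H) :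
    ∃ (s : Finset ℕ) (m₀ : ℕ → M) (m₁ : ℕ → H), x = ∑ i ∈ s, m₀ i ⊗ₜ[k] m₁ i := by
  classical
  induction x using TensorProduct.induction_on with
  | zero => exact ⟨∅, 0, 0, by simp⟩
  | tmul m h => exact ⟨{0}, fun _ => m, fun _ => h, by simp⟩
  | add x y hx hy =>
    obtain ⟨s, m₀, m₁, rfl⟩ := hx
    obtain ⟨t, n₀, n₁, rfl⟩ := hy
    refine ⟨s.image (fun i => 2 * i) ∪ t.image (fun i => 2 * i + 1),
      fun i => if i % 2 = 0 then m₀ (i / 2) else n₀ (i / 2),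
      fun i => if i % 2 = 0 then m₁ (i / 2) else n₁ (i / 2), ?_⟩
    rw [Finset.sum_union]
    · congr 1
      · rw [Finset.sum_image (by intro a _ b _ hab; simp only at hab; omega)]
        refine Finset.sum_congr rfl fun i _ => ?_
        simp [Nat.mul_mod_right, Nat.mul_div_cancel_left]
      · rw [Finset.sum_image (by intro a _ b _ hab; simp only at hab; omega)]
        refine Finset.sum_congr rfl fun i _ => ?_
        have h1 : (2 * i + 1) % 2 = 1 := by omega
        have h2 : (2 * i + 1) / 2 = i := by omega
        simp [h1, h2]
    · rw [Finset.disjoint_left]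
      intro a ha hb
      simp only [Finset.mem_image] at ha hb
      obtain ⟨i, _, hi⟩ := ha
      obtain ⟨j, _, hj⟩ := hb
      omega

lemma eval_inj {N : Type} [AddCommGroup N] [Module k N] [FiniteDimensional k N]
    {x y : Module.End k N ⊗[k] H}
    (hxy : ∀ m : N, LinearMap.rTensor H (LinearMap.applyₗ (R := k) m) x
      = LinearMap.rTensor H (LinearMap.applyₗ (R := k) m) y) : x = y := by
  have key : ∀ (z : Module.End k N ⊗[k] H) (m : N),
      rTensorHomToHomRTensor (RingHom.id k) N N H z m
        = LinearMap.rTensor H (LinearMap.applyₗ (R := k) m) z := by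
    intro z m
    induction z using TensorProduct.induction_on with
    | zero => simp
    | tmul f q => simp [LinearMap.rTensor_tmul]
    | add z₁ z₂ h₁ h₂ => simp only [map_add, LinearMap.add_apply, h₁, h₂]
  apply (rTensorHomEquivHomRTensor k N N H).injective
  rw [rTensorHomEquivHomRTensor_apply, rTensorHomEquivHomRTensor_apply]
  ext m
  rw [key, key]
  exact hxy m

end GYDProofAux

theorem statement_17
    (k H : Type) [Field k] [Ring H] [HopfAlgebra k H]
    (Sinv : H → H) (hS : GYD.IsAntipodeInv k H Sinv)
    (α β γ δ : H ≃ₗ[k] H)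
    (hα : GYD.IsHopfAut k H α) (hβ : GYD.IsHopfAut k H β)
    (hγ : GYD.IsHopfAut k H γ) (hδ : GYD.IsHopfAut k H δ)
    (N : Type) [AddCommGroup N] [Module k N] [FiniteDimensional k N]
    (actN : H →ₗ[k] N →ₗ[k] N) (coactN : N →ₗ[k] N ⊗[k] H)
    (hN : GYD.IsYD k H Sinv ⇑γ ⇑δ actN coactN)
    -- End(N)
    (actEN : H →ₗ[k] Module.End k N →ₗ[k] Module.End k N)
    (coactEN : Module.End k N →ₗ[k] Module.End k N ⊗[k] H)
    (hactEN : GYD.EndActChar k H ⇑γ.symm actN actEN)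
    (hcoactEN : GYD.EndCoactChar k H Sinv coactN coactEN)
    -- End(^{(α,β)}N), where ^{(α,β)}N is N with action h ⇀ n = γ⁻¹βγα⁻¹(h)·n and
    -- coaction n ↦ n₍₀₎ ⊗ αβ⁻¹(n₍₁₎); it is an (αγα⁻¹, αβ⁻¹δγ⁻¹βγα⁻¹)-YD module
    (actETw : H →ₗ[k] Module.End k N →ₗ[k] Module.End k N)
    (coactETw : Module.End k N →ₗ[k] Module.End k N ⊗[k] H)
    (hactETw : GYD.EndActChar k H (fun h => α (γ.symm (α.symm h)))
      (actN ∘ₗ (α.symm.trans (γ.trans (β.trans γ.symm))).toLinearMap) actETw)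
    (hcoactETw : GYD.EndCoactChar k H Sinv
      ((LinearMap.lTensor N (β.symm.trans α).toLinearMap) ∘ₗ coactN) coactETw) :
    -- End(^{(α,β)}N) = End(N)(βα⁻¹) as algebras in the Yetter-Drinfeld category:
    (∀ (h : H) (u : Module.End k N), actETw h u = actEN (β (α.symm h)) u) ∧
    (∀ u : Module.End k N,
        coactETw u = LinearMap.lTensor (Module.End k N) (β.symm.trans α).toLinearMap
          (coactEN u)) := by
  classical
  open GYDProofAux in
  have hφ₁ : GYD.IsHopfAut k H (α.symm.trans β) :=
    isHopfAut_trans (isHopfAut_symm hα) hβ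
  have hφ₂ : GYD.IsHopfAut k H (β.symm.trans α) :=
    isHopfAut_trans (isHopfAut_symm hβ) hα
  constructor
  · intro h u
    ext m
    obtain ⟨s, p, q, hpq⟩ := GYDProofAux.exists_rep (Coalgebra.comul (R := k) h)
    have hcom : Coalgebra.comul (R := k) (β (α.symm h))
        = ∑ i ∈ s, β (α.symm (p i)) ⊗ₜ[k] β (α.symm (q i)) := by
      have := hφ₁.2.2.1 h
      rw [hpq, map_sum] at this
      simpa using this
    rw [hactETw h u m s p q hpq,
      hactEN (β (α.symm h)) u m s (fun i => β (α.symm (p i))) (fun i => β (α.symm (q i))) hcom]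
    refine Finset.sum_congr rfl fun i _ => ?_
    have hanti : HopfAlgebra.antipode (R := k) (β (α.symm (q i)))
        = β (α.symm (HopfAlgebra.antipode (R := k) (q i))) :=
      GYDProofAux.antipode_comm hφ₁ (q i)
    simp [hanti]
  · intro u
    apply GYDProofAux.eval_inj
    intro m
    obtain ⟨t, m₀, m₁, hm⟩ := GYDProofAux.exists_rep (coactN m)
    choose r n₀ n₁ hn using fun j => GYDProofAux.exists_rep (coactN (u (m₀ j)))
    have hm' : ((LinearMap.lTensor N (β.symm.trans α).toLinearMap) ∘ₗ coactN) m
        = ∑ j ∈ t, m₀ j ⊗ₜ[k] (α (β.symm (m₁ j))) := by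
      rw [LinearMap.comp_apply, hm, map_sum]
      simp
    have hn' : ∀ j ∈ t, ((LinearMap.lTensor N (β.symm.trans α).toLinearMap) ∘ₗ coactN) (u (m₀ j))
        = ∑ l ∈ r j, n₀ j l ⊗ₜ[k] (α (β.symm (n₁ j l))) := by
      intro j _
      rw [LinearMap.comp_apply, hn j, map_sum]
      simp
    rw [hcoactETw u m t m₀ (fun j => α (β.symm (m₁ j))) r n₀
      (fun j l => α (β.symm (n₁ j l))) hm' hn']
    have comm : ∀ z : Module.End k N ⊗[k] H,
        LinearMap.rTensor H (LinearMap.applyₗ (R := k) m)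
            (LinearMap.lTensor (Module.End k N) (β.symm.trans α).toLinearMap z)
          = LinearMap.lTensor N (β.symm.trans α).toLinearMap
            (LinearMap.rTensor H (LinearMap.applyₗ (R := k) m) z) := by
      intro z
      induction z using TensorProduct.induction_on with
      | zero => simp
      | tmul f q => simp
      | add z₁ z₂ h₁ h₂ => simp only [map_add, h₁, h₂]
    rw [comm, hcoactEN u m t m₀ m₁ r n₀ n₁ hm (fun j _ => hn j), map_sum]
    refine Finset.sum_congr rfl fun j hj => ?_
    rw [map_sum]
    refine Finset.sum_congr rfl fun l hl => ?_
    have hsinv : Sinv (α (β.symm (m₁ j))) = α (β.symm (Sinv (m₁ j))) :=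
      GYDProofAux.sinv_comm hS hφ₂ (m₁ j)
    have hmul : α (β.symm (Sinv (m₁ j) * n₁ j l))
        = α (β.symm (Sinv (m₁ j))) * α (β.symm (n₁ j l)) := hφ₂.1 _ _
    simp only [LinearMap.lTensor_tmul]
    show n₀ j l ⊗ₜ[k] (Sinv (α (β.symm (m₁ j))) * α (β.symm (n₁ j l)))
      = n₀ j l ⊗ₜ[k] (α.toLinearMap (β.symm.toLinearMap (Sinv (m₁ j) * n₁ j l)))
    rw [hsinv]
    congr 1
    exact hmul.symm


end
end
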